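/- For the function f(z) = (z + a)/(1 + az) with a = √(3/11), which is analytic on the open unit disk D and satisfies |f(z)| ≤ 1 on D, and for every r with √(11/27) < r < 1, there exists z with |z| = r such that |f(z)|^2 + ∑_{k=1}^∞ |a_k|^2 r^{2k} > 1, where a_k are the Taylor coefficients of f. Hence the radius √(11/27) in the inequality |f(z)|^2 + ∑_{k=1}^∞ |a_k|^2 r^{2k} ≤ 1 cannot be improved. -/

import Mathlib

open Metric

/-- Theorem 6, sharpness: for `f(z) = (z+a)/(1+az)` with `a = √(3/11)` (whose Taylor
coefficients satisfy `a_0 = a` and `|a_k| = (1-a^2) a^{k-1}` for `k ≥ 1`), for every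
`r ∈ (√(11/27), 1)` there is `z` with `|z| = r` and
`|f(z)|^2 + ∑_{k=1}^∞ |a_k|^2 r^{2k} > 1`. -/
theorem improved_bohr_sq_coeff_sharp (r : ℝ)
    (hr1 : Real.sqrt (11/27) < r) (hr2 : r < 1) :
    ∃ z : ℂ, ‖z‖ = r ∧
      1 < (‖(z + (Real.sqrt (3/11) : ℂ)) / (1 + (Real.sqrt (3/11) : ℂ) * z)‖) ^ 2
        + ∑' k : ℕ,
            ((1 - Real.sqrt (3/11) ^ 2) * Real.sqrt (3/11) ^ k) ^ 2 * r ^ (2 * (k + 1)) := by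
  set a := Real.sqrt (3/11) with ha_def
  have ha2 : a ^ 2 = 3/11 := Real.sq_sqrt (by norm_num)
  have ha_pos : 0 < a := Real.sqrt_pos.mpr (by norm_num)
  have ha1 : a < 1 := by nlinarith [sq_nonneg (a - 1)]
  have hr0 : 0 < r := lt_of_le_of_lt (Real.sqrt_nonneg _) hr1
  have hrsq : 11/27 < r ^ 2 := (Real.sqrt_lt' hr0).mp hr1
  have hu0 : 0 < a * r := mul_pos ha_pos hr0
  have hu2 : (a * r) ^ 2 = 3/11 * r ^ 2 := by rw [mul_pow, ha2]
  have hu13 : 1/3 < a * r := by nlinarith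
  have hu1 : a * r < 1 := lt_trans (mul_lt_of_lt_one_left hr0 ha1) hr2
  refine ⟨(r : ℂ), ?_, ?_⟩
  · rw [Complex.norm_real, Real.norm_eq_abs, abs_of_pos hr0]
  have habs : ‖((r:ℂ) + (a : ℂ)) / (1 + (a : ℂ) * (r:ℂ))‖ = (r + a) / (1 + a * r) := by
    have h1 : ((r:ℂ) + (a : ℂ)) = ((r + a : ℝ) : ℂ) := by push_cast; ring
    have h2 : (1 + (a : ℂ) * (r:ℂ)) = ((1 + a * r : ℝ) : ℂ) := by push_cast; ring
    rw [h1, h2, norm_div, Complex.norm_real, Real.norm_eq_abs, Complex.norm_real, Real.norm_eq_abs,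
      abs_of_pos (by positivity), abs_of_pos (by positivity)]
  rw [habs]
  have hterm : ∀ k : ℕ, ((1 - a ^ 2) * a ^ k) ^ 2 * r ^ (2 * (k + 1))
      = ((1 - a^2)^2 * r^2) * (a^2 * r^2) ^ k := by
    intro k
    rw [pow_mul]
    ring
  have hlt : a^2 * r^2 < 1 := by nlinarith
  have hsum : ∑' k : ℕ, ((1 - a ^ 2) * a ^ k) ^ 2 * r ^ (2 * (k + 1))
      = ((1 - a^2)^2 * r^2) * (1 - a^2 * r^2)⁻¹ := by
    simp_rw [hterm]
    rw [tsum_mul_left, tsum_geometric_of_lt_one (by positivity) hlt]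
  rw [hsum]
  have hden1 : (0:ℝ) < 1 + a * r := by linarith
  have hden2 : (0:ℝ) < 1 - a^2 * r^2 := by linarith
  rw [div_pow]
  rw [show ((r + a)^2 / (1 + a*r)^2 + (1 - a^2)^2 * r^2 * (1 - a^2*r^2)⁻¹)
      = ((r + a)^2 * (1 - a^2*r^2) + (1 - a^2)^2 * r^2 * (1 + a*r)^2)
        / ((1 + a*r)^2 * (1 - a^2*r^2)) by field_simp; rw [add_div' _ _ _ (ne_of_gt (by nlinarith))]]
  rw [lt_div_iff₀ (by positivity)]
  have key : 0 < (3*(a*r) - 1) * (3 + 9*(a*r) + 5*(a*r)^2 - (a*r)^3) :=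
    mul_pos (by linarith) (by nlinarith)
  have main : (r + a)^2 * (1 - a^2*r^2) + (1 - a^2)^2 * r^2 * (1 + a*r)^2
      - (1 + a*r)^2 * (1 - a^2*r^2)
      = 8/33 * ((3*(a*r) - 1) * (3 + 9*(a*r) + 5*(a*r)^2 - (a*r)^3)) := by
    linear_combination (1 - 22/3*r^2 - 22/3*a*r^3 + 2*a^3*r^3 + a^4*r^4) * ha2
  nlinarith [key, main]
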